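/- If a permutation p of length n-1 is sortable by the left-greedy algorithm on t-1 stacks in series, then inserting the value n into any position of p yields a permutation of length n that is sortable by the left-greedy algorithm on t stacks in series. -/

import Mathlib

/-- A configuration for sorting with `t` stacks in series: the remaining input,
the stacks (index `0` is the leftmost, next to the output; index `t-1` is the
rightmost, next to the input; the head of each list is the top of the stack),
and the output produced so far. -/
structure Conf where
  input : List ℕ
  stks : List (List ℕ)
  output : List ℕ
deriving DecidableEq, Repr

/-- `x` may be placed on top of a stack iff the stack is empty or `x` is smaller
than the current top (stacks are increasing from top to bottom). -/
def canPush (x : ℕ) : List ℕ → Bool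
  | [] => true
  | y :: _ => decide (x < y)

/-- Moves, ordered left to right: `0` = pop the leftmost stack to the output
(legal only for the next element of the identity); `m` with `0 < m < t` = move the
top of stack `m` one stack to the left; `t` = push the next input element onto the
rightmost stack. -/
def legal (t : ℕ) (c : Conf) (m : ℕ) : Bool :=
  if m = 0 then
    match c.stks.getD 0 [] with
    | x :: _ => x == c.output.length + 1
    | [] => false
  else if m < t then
    match c.stks.getD m [] with
    | x :: _ => canPush x (c.stks.getD (m-1) [])
    | [] => false
  else if m = t then
    match c.input with
    | x :: _ => canPush x (c.stks.getD (t-1) [])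
    | [] => false
  else false

/-- Perform move `m` on configuration `c` (with `t` stacks). -/
def applyMove (t : ℕ) (c : Conf) (m : ℕ) : Conf :=
  if m = 0 then
    match c.stks.getD 0 [] with
    | x :: s => ⟨c.input, c.stks.set 0 s, c.output ++ [x]⟩
    | [] => c
  else if m < t then
    match c.stks.getD m [] with
    | x :: s => ⟨c.input, (c.stks.set m s).set (m-1) (x :: c.stks.getD (m-1) []), c.output⟩
    | [] => c
  else
    match c.input with
    | x :: rest => ⟨rest, c.stks.set (t-1) (x :: c.stks.getD (t-1) []), c.output⟩
    | [] => c

def initConf (t : ℕ) (p : List ℕ) : Conf := ⟨p, List.replicate t [], []⟩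

/-- The fully sorted configuration: empty input and stacks, output `1,2,...,n`. -/
def finalConf (t n : ℕ) : Conf := ⟨[], List.replicate t [], List.range' 1 n⟩

/-- Run a sequence of moves, requiring each to be legal. -/
def runLegal (t : ℕ) : Conf → List ℕ → Option Conf
  | c, [] => some c
  | c, m :: ms => if legal t c m then runLegal t (applyMove t c m) ms else none

/-- `p` is sortable by `t` stacks in series by some sequence of legal moves. -/
def Sortable (t : ℕ) (p : List ℕ) : Prop :=
  ∃ ms : List ℕ, runLegal t (initConf t p) ms = some (finalConf t p.length)

/-- The leftmost legal move, if any. -/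
def leftMove (t : ℕ) (c : Conf) : Option ℕ :=
  ((List.range (t+1)).filter (fun m => legal t c m)).head?

/-- The rightmost legal move, if any. -/
def rightMove (t : ℕ) (c : Conf) : Option ℕ :=
  ((List.range (t+1)).filter (fun m => legal t c m)).getLast?

/-- One step of a greedy algorithm given by the move selector `mv`
(the configuration is unchanged if no move is legal, i.e. the algorithm fails or is done). -/
def greedyStep (mv : ℕ → Conf → Option ℕ) (t : ℕ) (c : Conf) : Conf :=
  match mv t c with
  | some m => applyMove t c m
  | none => c

/-- The greedy algorithm given by `mv` sorts `p` with `t` stacks in series. -/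
def GreedySorts (mv : ℕ → Conf → Option ℕ) (t : ℕ) (p : List ℕ) : Prop :=
  ∃ k : ℕ, (greedyStep mv t)^[k] (initConf t p) = finalConf t p.length

def LeftGreedySorts : ℕ → List ℕ → Prop := GreedySorts leftMove
def RightGreedySorts : ℕ → List ℕ → Prop := GreedySorts rightMove

/-- `p` is a permutation of `1,...,n` (as a list). -/
def IsPermOf (n : ℕ) (p : List ℕ) : Prop := p.Perm (List.range' 1 n)

/-- The position of the element `x` in configuration `c`: `0` if in the output
(furthest left), `j+1` if in stack `j`, `t+1` if still in the input (furthest right). -/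
def posOf (t : ℕ) (c : Conf) (x : ℕ) : ℕ :=
  if x ∈ c.output then 0
  else match (List.range t).find? (fun j => decide (x ∈ c.stks.getD j [])) with
    | some j => j + 1
    | none => t + 1

/-- `c` is at the `i`-th critical moment for the greedy algorithm `mv` on a
permutation of length `n`: either the chosen move is the entry of the `i`-th
element into the stacks, or the algorithm fails (no legal move, incomplete output). -/
def IsCrit (mv : ℕ → Conf → Option ℕ) (t i n : ℕ) (c : Conf) : Prop :=
  (c.input.length + i = n + 1 ∧ mv t c = some t) ∨
  (mv t c = none ∧ c.output.length < n)

/-- `c` is the configuration at the `i`-th critical moment of the greedy algorithm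
`mv` run on `p` (the first moment along the run satisfying `IsCrit`). -/
def CritConf (mv : ℕ → Conf → Option ℕ) (t i n : ℕ) (p : List ℕ) (c : Conf) : Prop :=
  ∃ k : ℕ, (greedyStep mv t)^[k] (initConf t p) = c ∧ IsCrit mv t i n c ∧
    ∀ k' < k, ¬ IsCrit mv t i n ((greedyStep mv t)^[k'] (initConf t p))

/-- No stack is empty while some stack to its right is nonempty. -/
def NoGap (t : ℕ) (c : Conf) : Prop :=
  ∀ j j' : ℕ, j < j' → j' < t → c.stks.getD j' [] ≠ [] → c.stks.getD j [] ≠ []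

/-- `r` contains `q` as a pattern. -/
def ContainsPat (r q : List ℕ) : Prop :=
  ∃ f : Fin q.length → Fin r.length, StrictMono f ∧
    ∀ a b : Fin q.length, q.get a < q.get b ↔ r.get (f a) < r.get (f b)

namespace StmtSix
open List

/-! ### find?/leftMove infrastructure -/

lemma head?_filter {α} (p : α → Bool) : ∀ l : List α, (l.filter p).head? = l.find? p
  | [] => rfl
  | a :: l => by
    by_cases h : p a <;> simp [List.filter_cons, List.find?_cons, h, head?_filter p l]

lemma find?_range'_eq (P : ℕ → Bool) (m : ℕ) : ∀ (s len : ℕ), s ≤ m → m < s + len →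
    P m = true → (∀ k, s ≤ k → k < m → P k = false) →
    (List.range' s len).find? P = some m := by
  intro s len
  induction len generalizing s with
  | zero => intro h1 h2; omega
  | succ n ih =>
    intro h1 h2 h3 h4
    rw [List.range'_succ, List.find?_cons]
    rcases Nat.eq_or_lt_of_le h1 with rfl | hlt
    · rw [h3]
    · rw [h4 s le_rfl hlt]
      exact ih (s+1) hlt (by omega) h3 (fun k hk1 hk2 => h4 k (by omega) hk2)

lemma find?_range'_min (P : ℕ → Bool) (m : ℕ) : ∀ (s len : ℕ),
    (List.range' s len).find? P = some m →
    P m = true ∧ s ≤ m ∧ m < s + len ∧ ∀ k, s ≤ k → k < m → P k = false := by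
  intro s len
  induction len generalizing s with
  | zero => intro h; simp at h
  | succ n ih =>
    intro h
    rw [List.range'_succ, List.find?_cons] at h
    by_cases hs : P s
    · rw [hs] at h; simp at h; subst h
      exact ⟨hs, le_rfl, by omega, fun k hk1 hk2 => by omega⟩
    · rw [Bool.of_not_eq_true hs] at h
      obtain ⟨g1, g2, g3, g4⟩ := ih (s+1) h
      refine ⟨g1, by omega, by omega, fun k hk1 hk2 => ?_⟩
      rcases Nat.eq_or_lt_of_le hk1 with rfl | hlt
      · exact Bool.of_not_eq_true hs
      · exact g4 k hlt hk2

lemma leftMove_eq_some {t m : ℕ} {c : Conf} (hm : m ≤ t) (h1 : legal t c m = true)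
    (h0 : ∀ k, k < m → legal t c k = false) : leftMove t c = some m := by
  unfold leftMove
  rw [head?_filter, List.range_eq_range']
  exact find?_range'_eq _ m 0 (t+1) (Nat.zero_le _) (by omega) h1 (fun k _ hk => h0 k hk)

lemma leftMove_eq_none {t : ℕ} {c : Conf} (h0 : ∀ k, legal t c k = false) :
    leftMove t c = none := by
  unfold leftMove
  rw [head?_filter, List.find?_eq_none]
  intro x _; simp [h0 x]

lemma leftMove_some_elim {t m : ℕ} {c : Conf} (h : leftMove t c = some m) :
    legal t c m = true ∧ m ≤ t ∧ ∀ k, k < m → legal t c k = false := by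
  unfold leftMove at h
  rw [head?_filter, List.range_eq_range'] at h
  obtain ⟨g1, _, g3, g4⟩ := find?_range'_min _ m 0 (t+1) h
  exact ⟨g1, by omega, fun k hk => g4 k (Nat.zero_le _) hk⟩

lemma greedyStep_of_some {t m : ℕ} {c : Conf} (h : leftMove t c = some m) :
    greedyStep leftMove t c = applyMove t c m := by
  unfold greedyStep; rw [h]

lemma greedyStep_of_none {t : ℕ} {c : Conf} (h : leftMove t c = none) :
    greedyStep leftMove t c = c := by
  unfold greedyStep; rw [h]

/-! ### legal / applyMove evaluation lemmas -/

lemma canPush_nil (x : ℕ) : canPush x [] = true := rfl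
lemma canPush_cons (x y : ℕ) (s : List ℕ) : canPush x (y :: s) = decide (x < y) := rfl

lemma legal_pop_nil (t : ℕ) (c : Conf) (h : c.stks.getD 0 [] = []) : legal t c 0 = false := by
  rw [List.getD_eq_getElem?_getD] at h; simp [legal, h]

lemma legal_pop_cons (t : ℕ) (c : Conf) (x : ℕ) (s : List ℕ) (h : c.stks.getD 0 [] = x :: s) :
    legal t c 0 = (x == c.output.length + 1) := by
  rw [List.getD_eq_getElem?_getD] at h; simp [legal, h]

lemma legal_mid_nil (t m : ℕ) (c : Conf) (h1 : m ≠ 0) (h2 : m < t)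
    (h : c.stks.getD m [] = []) : legal t c m = false := by
  rw [List.getD_eq_getElem?_getD] at h; simp [legal, h1, h2, h, List.getD_eq_getElem?_getD]

lemma legal_mid_cons (t m : ℕ) (c : Conf) (x : ℕ) (s : List ℕ) (h1 : m ≠ 0) (h2 : m < t)
    (h : c.stks.getD m [] = x :: s) : legal t c m = canPush x (c.stks.getD (m-1) []) := by
  rw [List.getD_eq_getElem?_getD] at h; simp [legal, h1, h2, h, List.getD_eq_getElem?_getD]

lemma legal_push_nil (t : ℕ) (c : Conf) (h1 : t ≠ 0) (h : c.input = []) :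
    legal t c t = false := by
  simp [legal, h1, h, List.getD_eq_getElem?_getD]

lemma legal_push_cons (t : ℕ) (c : Conf) (x : ℕ) (rest : List ℕ) (h1 : t ≠ 0)
    (h : c.input = x :: rest) : legal t c t = canPush x (c.stks.getD (t-1) []) := by
  simp [legal, h1, h, List.getD_eq_getElem?_getD]

lemma apply_pop (t : ℕ) (c : Conf) (x : ℕ) (s : List ℕ) (h : c.stks.getD 0 [] = x :: s) :
    applyMove t c 0 = ⟨c.input, c.stks.set 0 s, c.output ++ [x]⟩ := by
  rw [List.getD_eq_getElem?_getD] at h; simp [applyMove, h]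

lemma apply_mid (t m : ℕ) (c : Conf) (x : ℕ) (s : List ℕ) (h1 : m ≠ 0) (h2 : m < t)
    (h : c.stks.getD m [] = x :: s) :
    applyMove t c m = ⟨c.input, (c.stks.set m s).set (m-1) (x :: c.stks.getD (m-1) []), c.output⟩ := by
  rw [List.getD_eq_getElem?_getD] at h; simp [applyMove, h1, h2, h, List.getD_eq_getElem?_getD]

lemma apply_push (t : ℕ) (c : Conf) (x : ℕ) (rest : List ℕ) (h1 : t ≠ 0)
    (h : c.input = x :: rest) :
    applyMove t c t = ⟨rest, c.stks.set (t-1) (x :: c.stks.getD (t-1) []), c.output⟩ := by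
  simp [applyMove, h1, h, List.getD_eq_getElem?_getD]

/-! ### list getD lemmas -/

lemma getD_set' (l : List (List ℕ)) (i j : ℕ) (a : List ℕ) :
    (l.set i a).getD j [] = if i = j ∧ i < l.length then a else l.getD j [] := by
  rw [List.getD_eq_getElem?_getD, List.getD_eq_getElem?_getD, List.getElem?_set]
  by_cases h1 : i = j
  · subst h1
    by_cases h2 : i < l.length
    · simp [h2]
    · simp [h2, List.getElem?_eq_none (by omega : l.length ≤ i)]
  · simp [h1]

lemma getD_append' (l l' : List (List ℕ)) (j : ℕ) :
    (l ++ l').getD j [] = if j < l.length then l.getD j [] else l'.getD (j - l.length) [] := by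
  split_ifs with h
  · exact List.getD_append l l' [] j h
  · exact List.getD_append_right l l' [] j (by omega)

lemma getD_nil' (j : ℕ) : ([] : List (List ℕ)).getD j [] = [] := by cases j <;> rfl

lemma getD_singleton (a : List ℕ) (j : ℕ) : [a].getD j [] = if j = 0 then a else [] := by
  cases j with
  | zero => rfl
  | succ n => simp [List.getD]

lemma stks_ext {l1 l2 : List (List ℕ)} (h : l1.length = l2.length)
    (h2 : ∀ j, j < l1.length → l1.getD j [] = l2.getD j []) : l1 = l2 := by
  apply List.ext_getElem h
  intro j hj1 hj2
  have := h2 j hj1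
  rwa [List.getD_eq_getElem _ _ hj1, List.getD_eq_getElem _ _ hj2] at this

lemma getD_replicate_nil (T j : ℕ) : (List.replicate T ([] : List ℕ)).getD j [] = [] := by
  rw [List.getD_eq_getElem?_getD, List.getElem?_replicate]
  split_ifs <;> rfl

lemma sum_map_len_set : ∀ (l : List (List ℕ)) (i : ℕ) (a : List ℕ), i < l.length →
    ((l.set i a).map List.length).sum + (l.getD i []).length
      = (l.map List.length).sum + a.length := by
  intro l
  induction l with
  | nil => intro i a h; simp at h
  | cons b l ih =>
    intro i a h
    cases i with
    | zero => simp [List.getD]; omega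
    | succ n =>
      simp only [List.set_cons_succ, List.map_cons, List.sum_cons, List.getD_cons_succ]
      have := ih n a (by simpa using h)
      omega

end StmtSix
namespace StmtSix

lemma legal_else (t m : ℕ) (c : Conf) (h0 : m ≠ 0) (h1 : ¬ m < t) (h2 : m ≠ t) :
    legal t c m = false := by
  simp [legal, h0, h1, h2]

lemma getD_mem (l : List (List ℕ)) (i : ℕ) (h : i < l.length) : l.getD i [] ∈ l := by
  rw [List.getD_eq_getElem _ _ h]
  exact List.getElem_mem _

lemma lt_length_of_getD_ne (l : List (List ℕ)) (i : ℕ) (h : l.getD i [] ≠ []) :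
    i < l.length := by
  by_contra hc
  exact h (List.getD_eq_default _ _ (by omega))

/-- Run invariant for the `T`-stack machine on a permutation of `1..N`. -/
def Inv (N T : ℕ) (d : Conf) : Prop :=
  d.stks.length = T ∧
  d.output = List.range' 1 d.output.length ∧
  d.input.length + (d.stks.map List.length).sum + d.output.length = N ∧
  (∀ l ∈ d.stks, ∀ x ∈ l, x ≤ N) ∧
  (∀ x ∈ d.input, x ≤ N)

lemma inv_stack_bound {N T : ℕ} {d : Conf} (hd : Inv N T d) (j : ℕ) :
    ∀ x ∈ d.stks.getD j [], x ≤ N := by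
  intro x hx
  by_cases h : j < d.stks.length
  · exact hd.2.2.2.1 _ (getD_mem _ _ h) x hx
  · rw [List.getD_eq_default _ _ (by omega)] at hx
    simp at hx

lemma inv_applyMove {N T m : ℕ} {d : Conf} (hd : Inv N T d) (hm : legal T d m = true) :
    Inv N T (applyMove T d m) := by
  obtain ⟨h1, h2, h3, h4, h5⟩ := hd
  by_cases hm0 : m = 0
  · subst hm0
    rcases hh : d.stks.getD 0 [] with _ | ⟨x, s⟩
    · rw [legal_pop_nil _ _ hh] at hm; exact absurd hm (by simp)
    · have hx : x = d.output.length + 1 := by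
        rw [legal_pop_cons _ _ _ _ hh] at hm
        simpa using hm
      have hlen0 : 0 < d.stks.length := lt_length_of_getD_ne _ _ (by rw [hh]; simp)
      have hmem0 : (x :: s) ∈ d.stks := by rw [← hh]; exact getD_mem _ _ hlen0
      have hsum := sum_map_len_set d.stks 0 s hlen0
      rw [hh] at hsum
      rw [apply_pop _ _ _ _ hh]
      refine ⟨by simpa using h1, ?_, ?_, ?_, h5⟩
      · show d.output ++ [x] = List.range' 1 (d.output ++ [x]).length
        rw [List.length_append]
        simp only [List.length_singleton]
        rw [List.range'_1_concat, ← h2, hx]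
        simp [Nat.add_comm]
      · simp only [List.length_append, List.length_singleton, List.length_cons,
          List.length_nil] at hsum ⊢
        omega
      · intro l hl y hy
        rcases List.mem_or_eq_of_mem_set hl with hl' | rfl
        · exact h4 _ hl' _ hy
        · exact h4 _ hmem0 _ (by simp [hy])
  · by_cases hmT : m < T
    · rcases hh : d.stks.getD m [] with _ | ⟨x, s⟩
      · rw [legal_mid_nil _ _ _ hm0 hmT hh] at hm; exact absurd hm (by simp)
      · have hmlen : m < d.stks.length := lt_length_of_getD_ne _ _ (by rw [hh]; simp)
        have hmemm : (x :: s) ∈ d.stks := by rw [← hh]; exact getD_mem _ _ hmlen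
        have hm1len : m - 1 < d.stks.length := by omega
        have hsum1 := sum_map_len_set d.stks m s hmlen
        rw [hh] at hsum1
        have hgd : (d.stks.set m s).getD (m-1) [] = d.stks.getD (m-1) [] := by
          rw [getD_set', if_neg]
          intro hc
          omega
        have hsum2 := sum_map_len_set (d.stks.set m s) (m-1)
          (x :: d.stks.getD (m-1) []) (by simpa using hm1len)
        rw [hgd] at hsum2
        rw [apply_mid _ _ _ _ _ hm0 hmT hh]
        refine ⟨by simpa using h1, h2, ?_, ?_, h5⟩
        · simp only [List.length_cons, List.length_nil] at hsum1 hsum2 ⊢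
          omega
        · intro l hl y hy
          rcases List.mem_or_eq_of_mem_set hl with hl' | rfl
          · rcases List.mem_or_eq_of_mem_set hl' with hl'' | rfl
            · exact h4 _ hl'' _ hy
            · exact h4 _ hmemm _ (by simp [hy])
          · rcases List.mem_cons.mp hy with rfl | hy'
            · exact h4 _ hmemm _ (by simp)
            · exact inv_stack_bound ⟨h1, h2, h3, h4, h5⟩ (m-1) _ hy'
    · have hmT' : m = T := by
        by_contra hc
        rw [legal_else _ _ _ hm0 hmT hc] at hm
        exact absurd hm (by simp)
      subst hmT'
      have hT0 : m ≠ 0 := hm0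
      rcases hh : d.input with _ | ⟨x, rest⟩
      · rw [legal_push_nil _ _ hT0 hh] at hm; exact absurd hm (by simp)
      · have hT1 : m - 1 < d.stks.length := by omega
        have hsum1 := sum_map_len_set d.stks (m-1) (x :: d.stks.getD (m-1) []) hT1
        rw [apply_push _ _ _ _ hT0 hh]
        refine ⟨by simpa using h1, h2, ?_, ?_, ?_⟩
        · rw [hh] at h3
          simp only [List.length_cons, List.length_nil] at hsum1 h3 ⊢
          omega
        · intro l hl y hy
          rcases List.mem_or_eq_of_mem_set hl with hl' | rfl
          · exact h4 _ hl' _ hy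
          · rcases List.mem_cons.mp hy with rfl | hy'
            · exact h5 _ (by rw [hh]; simp)
            · exact inv_stack_bound ⟨h1, h2, h3, h4, h5⟩ (m-1) _ hy'
        · intro y hy
          exact h5 _ (by rw [hh]; simp [hy])

lemma inv_greedyStep {N T : ℕ} {d : Conf} (hd : Inv N T d) :
    Inv N T (greedyStep leftMove T d) := by
  rcases hl : leftMove T d with _ | m
  · rwa [greedyStep_of_none hl]
  · rw [greedyStep_of_some hl]
    exact inv_applyMove hd (leftMove_some_elim hl).1

lemma inv_init (N T : ℕ) (p : List ℕ) (hb : ∀ x ∈ p, x ≤ N) (hl : p.length = N) :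
    Inv N T (initConf T p) := by
  refine ⟨by simp [initConf], by simp [initConf], ?_, by simp [initConf], by simpa [initConf] using hb⟩
  simp [initConf, List.map_replicate, List.sum_replicate, hl]

lemma inv_iterate (N T : ℕ) (p : List ℕ) (hb : ∀ x ∈ p, x ≤ N) (hl : p.length = N) (k : ℕ) :
    Inv N T ((greedyStep leftMove T)^[k] (initConf T p)) := by
  induction k with
  | zero => exact inv_init N T p hb hl
  | succ n ih => rw [Function.iterate_succ_apply']; exact inv_greedyStep ih

lemma eq_final_of_outlen {N T : ℕ} {d : Conf} (hd : Inv N T d) (h : d.output.length = N) :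
    d = finalConf T N := by
  obtain ⟨h1, h2, h3, h4, h5⟩ := hd
  have hin : d.input = [] := List.eq_nil_of_length_eq_zero (by omega)
  have hsum : (d.stks.map List.length).sum = 0 := by omega
  have hstks : d.stks = List.replicate T [] := by
    rw [List.eq_replicate_iff]
    refine ⟨h1, fun b hb => ?_⟩
    apply List.eq_nil_of_length_eq_zero
    exact List.sum_eq_zero_iff.mp hsum _ (List.mem_map_of_mem hb)
  have hout : d.output = List.range' 1 N := by rw [h2, h]
  cases d
  simp only at hin hstks hout
  rw [finalConf, hin, hstks, hout]

lemma legal_final (N T k : ℕ) : legal T (finalConf T N) k = false := by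
  have hst : ∀ j, (finalConf T N).stks.getD j [] = [] := fun j => getD_replicate_nil T j
  by_cases h0 : k = 0
  · subst h0; exact legal_pop_nil _ _ (hst 0)
  · by_cases h1 : k < T
    · exact legal_mid_nil _ _ _ h0 h1 (hst k)
    · by_cases h2 : k = T
      · subst h2; exact legal_push_nil _ _ (fun hc => h0 (by omega)) rfl
      · exact legal_else _ _ _ h0 h1 h2

lemma leftMove_final (N T : ℕ) : leftMove T (finalConf T N) = none :=
  leftMove_eq_none (fun k => legal_final N T k)

lemma out_lt_of_some {N T m : ℕ} {d : Conf} (hd : Inv N T d) (hm : leftMove T d = some m) :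
    d.output.length < N := by
  have hle : d.output.length ≤ N := by
    obtain ⟨_, _, h3, _, _⟩ := hd
    omega
  rcases lt_or_eq_of_le hle with h | h
  · exact h
  · rw [eq_final_of_outlen hd h] at hm
    rw [leftMove_final] at hm
    exact absurd hm (by simp)

end StmtSix
namespace StmtSix

/-! ### The simulation relations -/

/-- Stack `j` of the big machine in phase B: the value `N+1` sits at the bottom
of stack `r`; other stacks agree with the small machine (stack `T` is empty). -/
def mkB (N T r : ℕ) (d : Conf) (j : ℕ) : List ℕ :=
  if j = r then (if r < T then d.stks.getD r [] else []) ++ [N+1]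
  else if j < T then d.stks.getD j [] else []

/-- Phase A relation: `N+1` still inside the input. -/
def RA (N T : ℕ) (d c : Conf) : Prop :=
  (∃ u v, d.input = u ++ v ∧ c.input = u ++ (N+1) :: v) ∧
  c.stks = d.stks ++ [[]] ∧ c.output = d.output

/-- Phase B relation: `N+1` sits at the bottom of stack `r`. -/
def RB (N T r : ℕ) (d c : Conf) : Prop :=
  r ≤ T ∧ c.input = d.input ∧ c.output = d.output ∧
  c.stks = (d.stks ++ [[]]).set r ((d.stks ++ [[]]).getD r [] ++ [N+1])

lemma e_getD {T : ℕ} {d : Conf} (h1 : d.stks.length = T) (j : ℕ) :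
    (d.stks ++ [[]]).getD j [] = if j < T then d.stks.getD j [] else [] := by
  rw [getD_append', h1, getD_singleton]
  split_ifs <;> rfl

lemma e_length {T : ℕ} {d : Conf} (h1 : d.stks.length = T) :
    (d.stks ++ [[]]).length = T + 1 := by simp [h1]

lemma RB_stks_iff {N T r : ℕ} {d : Conf} (h1 : d.stks.length = T) (hr : r ≤ T)
    (l : List (List ℕ)) :
    l = (d.stks ++ [[]]).set r ((d.stks ++ [[]]).getD r [] ++ [N+1]) ↔
    (l.length = T + 1 ∧ ∀ j, j < T + 1 → l.getD j [] = mkB N T r d j) := by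
  constructor
  · rintro rfl
    constructor
    · simp [h1]
    · intro j hj
      rw [getD_set', e_length h1, e_getD h1, e_getD h1, mkB]
      split_ifs with g1 g2 g3 g4 g5 <;> first | rfl | omega
  · rintro ⟨hl, hpt⟩
    apply stks_ext
    · rw [hl, List.length_set, e_length h1]
    · intro j hj
      rw [hl] at hj
      rw [hpt j hj, getD_set', e_length h1, e_getD h1, e_getD h1, mkB]
      split_ifs with g1 g2 g3 g4 g5 <;> first | rfl | omega

lemma RB_getD {N T r : ℕ} {d c : Conf} (h1 : d.stks.length = T) (hrb : RB N T r d c) (j : ℕ)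
    (hj : j < T + 1) : c.stks.getD j [] = mkB N T r d j :=
  ((RB_stks_iff h1 hrb.1 c.stks).mp hrb.2.2.2).2 j hj

lemma RB_len {N T r : ℕ} {d c : Conf} (h1 : d.stks.length = T) (hrb : RB N T r d c) :
    c.stks.length = T + 1 :=
  ((RB_stks_iff h1 hrb.1 c.stks).mp hrb.2.2.2).1

lemma RA_getD {T N : ℕ} {d c : Conf} (h1 : d.stks.length = T) (hra : RA N T d c) (j : ℕ) :
    c.stks.getD j [] = if j < T then d.stks.getD j [] else [] := by
  rw [hra.2.1, e_getD h1]

/-! ### legality transfer, phase A -/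

lemma legal_ra_low {N T : ℕ} {d c : Conf} (h1 : d.stks.length = T) (hra : RA N T d c)
    (k : ℕ) (hk : k < T) : legal (T+1) c k = legal T d k := by
  have hs : ∀ j, j < T → c.stks.getD j [] = d.stks.getD j [] := by
    intro j hj; rw [RA_getD h1 hra, if_pos hj]
  by_cases hk0 : k = 0
  · subst hk0
    rcases hh : d.stks.getD 0 [] with _ | ⟨x, s⟩
    · rw [legal_pop_nil _ _ hh, legal_pop_nil]
      rw [hs 0 hk, hh]
    · rw [legal_pop_cons _ _ _ _ hh, legal_pop_cons _ _ x s (by rw [hs 0 hk, hh]),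
        hra.2.2]
  · rcases hh : d.stks.getD k [] with _ | ⟨x, s⟩
    · rw [legal_mid_nil _ _ _ hk0 hk hh, legal_mid_nil _ _ _ hk0 (by omega)
        (by rw [hs k hk, hh])]
    · rw [legal_mid_cons _ _ _ _ _ hk0 hk hh,
        legal_mid_cons _ _ _ x s hk0 (by omega) (by rw [hs k hk, hh]),
        hs (k-1) (by omega)]

lemma legal_ra_T {N T : ℕ} {d c : Conf} (hT : 1 ≤ T) (h1 : d.stks.length = T)
    (hra : RA N T d c) : legal (T+1) c T = false := by
  apply legal_mid_nil _ _ _ (by omega) (by omega)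
  rw [RA_getD h1 hra, if_neg (by omega)]

lemma legal_ra_push {N T : ℕ} {d c : Conf} (hT : 1 ≤ T) (h1 : d.stks.length = T)
    (hra : RA N T d c) {x : ℕ} {rest : List ℕ} (hin : c.input = x :: rest) :
    legal (T+1) c (T+1) = true := by
  rw [legal_push_cons _ _ x rest (by omega) hin]
  have : c.stks.getD (T+1-1) [] = [] := by
    rw [RA_getD h1 hra]; rw [if_neg (by omega)]
  rw [this, canPush_nil]

/-! ### legality transfer, phase B -/

lemma legal_rb_low {N T r : ℕ} {d c : Conf} (hd : Inv N T d) (hrb : RB N T r d c)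
    (k : ℕ) (hk : k < T)
    (hcond : k ≠ r ∨ (if r < T then d.stks.getD r [] else []) ≠ []) :
    legal (T+1) c k = legal T d k := by
  have h1 : d.stks.length = T := hd.1
  have hge : ∀ j, j < T + 1 → c.stks.getD j [] = mkB N T r d j := fun j hj => RB_getD h1 hrb j hj
  by_cases hk0 : k = 0
  · subst hk0
    rcases hh : d.stks.getD 0 [] with _ | ⟨x, s⟩
    · -- d stack 0 empty; then k ≠ r or er ≠ [] forces c stack 0 = []
      have hc0 : c.stks.getD 0 [] = [] := by
        rw [hge 0 (by omega), mkB]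
        rcases hcond with hcond | hcond
        · rw [if_neg hcond, if_pos hk, hh]
        · rcases eq_or_ne (0 : ℕ) r with hr0 | hr0
          · rw [← hr0] at hcond; rw [if_pos hk, hh] at hcond; simp at hcond
          · rw [if_neg hr0, if_pos hk, hh]
      rw [legal_pop_nil _ _ hc0, legal_pop_nil _ _ hh]
    · -- d stack 0 has head x; c stack 0 has head x as well
      have hc0 : ∃ s', c.stks.getD 0 [] = x :: s' := by
        rw [hge 0 (by omega), mkB]
        rcases eq_or_ne (0 : ℕ) r with hr0 | hr0
        · rw [if_pos hr0, ← hr0, if_pos hk, hh]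
          exact ⟨s ++ [N+1], rfl⟩
        · rw [if_neg hr0, if_pos hk, hh]
          exact ⟨s, rfl⟩
      obtain ⟨s', hc0⟩ := hc0
      rw [legal_pop_cons _ _ _ _ hc0, legal_pop_cons _ _ _ _ hh, hrb.2.2.1]
  · -- interior move k, 1 ≤ k < T
    -- source stacks share heads (or both empty); targets give equal canPush
    have htgt : ∀ x : ℕ, x ≤ N →
        canPush x (c.stks.getD (k-1) []) = canPush x (d.stks.getD (k-1) []) := by
      intro x hx
      rw [hge (k-1) (by omega), mkB]
      rcases eq_or_ne (k-1) r with hr0 | hr0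
      · rw [if_pos hr0, ← hr0, if_pos (by omega)]
        rcases hh : d.stks.getD (k-1) [] with _ | ⟨y, s⟩
        · rw [List.nil_append, canPush_nil, canPush_cons]
          simp; omega
        · rw [List.cons_append, canPush_cons, canPush_cons]
      · rw [if_neg hr0, if_pos (by omega)]
    rcases hh : d.stks.getD k [] with _ | ⟨x, s⟩
    · have hck : c.stks.getD k [] = [] := by
        rw [hge k (by omega), mkB]
        rcases hcond with hcond | hcond
        · rw [if_neg hcond, if_pos hk, hh]
        · rcases eq_or_ne k r with hr0 | hr0
          · rw [← hr0] at hcond; rw [if_pos hk, hh] at hcond; simp at hcond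
          · rw [if_neg hr0, if_pos hk, hh]
      rw [legal_mid_nil _ _ _ hk0 (by omega) hck, legal_mid_nil _ _ _ hk0 hk hh]
    · have hx : x ≤ N := inv_stack_bound hd k x (by rw [hh]; simp)
      have hck : ∃ s', c.stks.getD k [] = x :: s' := by
        rw [hge k (by omega), mkB]
        rcases eq_or_ne k r with hr0 | hr0
        · rw [if_pos hr0, ← hr0, if_pos hk, hh]
          exact ⟨s ++ [N+1], rfl⟩
        · rw [if_neg hr0, if_pos hk, hh]
          exact ⟨s, rfl⟩
      obtain ⟨s', hck⟩ := hck
      rw [legal_mid_cons _ _ _ _ _ hk0 (by omega) hck, legal_mid_cons _ _ _ _ _ hk0 hk hh]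
      exact htgt x hx

/-- The `N+1`-pop is illegal as long as the small machine is not done. -/
lemma legal_rb_popN {N T r : ℕ} {d c : Conf} (hd : Inv N T d) (hrb : RB N T r d c)
    (hr0 : r = 0) (her : (if r < T then d.stks.getD r [] else []) = [])
    (hout : d.output.length < N) : legal (T+1) c 0 = false := by
  have h1 : d.stks.length = T := hd.1
  have hc0 : c.stks.getD 0 [] = [N+1] := by
    rw [RB_getD h1 hrb 0 (by omega), mkB, if_pos hr0.symm, her, List.nil_append]
  rw [legal_pop_cons _ _ _ _ hc0, hrb.2.2.1]
  simp
  omega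

/-- Migration move of `N+1` from stack `r` to stack `r-1`: legality. -/
lemma legal_rb_self {N T r : ℕ} {d c : Conf} (hd : Inv N T d) (hrb : RB N T r d c)
    (hr0 : 1 ≤ r) (her : (if r < T then d.stks.getD r [] else []) = []) :
    legal (T+1) c r = (decide (d.stks.getD (r-1) [] = [])) := by
  have h1 : d.stks.length = T := hd.1
  have hr : r ≤ T := hrb.1
  have hcr : c.stks.getD r [] = [N+1] := by
    rw [RB_getD h1 hrb r (by omega), mkB, if_pos rfl, her, List.nil_append]
  have hcr1 : c.stks.getD (r-1) [] = d.stks.getD (r-1) [] := by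
    rw [RB_getD h1 hrb (r-1) (by omega), mkB, if_neg (by omega), if_pos (by omega)]
  rw [legal_mid_cons _ _ _ _ _ (by omega) (by omega) hcr, hcr1]
  rcases hh : d.stks.getD (r-1) [] with _ | ⟨y, s⟩
  · rw [canPush_nil]; simp
  · have hy : y ≤ N := inv_stack_bound hd (r-1) y (by rw [hh]; simp)
    rw [canPush_cons]
    simp
    omega

/-- Stack `T` of the big machine is empty when `r < T`. -/
lemma legal_rb_T {N T r : ℕ} {d c : Conf} (hd : Inv N T d) (hrb : RB N T r d c)
    (hrT : r < T) : legal (T+1) c T = false := by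
  have h1 : d.stks.length = T := hd.1
  apply legal_mid_nil _ _ _ (by omega) (by omega)
  rw [RB_getD h1 hrb T (by omega), mkB, if_neg (by omega), if_neg (by omega)]

lemma legal_rb_push {N T r : ℕ} {d c : Conf} (hd : Inv N T d) (hrb : RB N T r d c)
    {x : ℕ} {rest : List ℕ} (hin : c.input = x :: rest) (hx : x ≤ N) :
    legal (T+1) c (T+1) = true := by
  have h1 : d.stks.length = T := hd.1
  have hr : r ≤ T := hrb.1
  rw [legal_push_cons _ _ x rest (by omega) hin]
  have hcT : c.stks.getD (T+1-1) [] = if T = r then [N+1] else [] := by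
    rw [show T+1-1 = T from rfl, RB_getD h1 hrb T (by omega), mkB]
    split_ifs with g1 g2 <;> first | omega | rfl | (rw [if_neg (by omega), List.nil_append])
  rw [hcT]
  split_ifs with g1
  · rw [canPush_cons]; simp; omega
  · rw [canPush_nil]

end StmtSix
namespace StmtSix

lemma legal_congr_lt {t k : ℕ} {c c' : Conf} (hk : k < t) (hout : c'.output = c.output)
    (hs1 : c'.stks.getD k [] = c.stks.getD k [])
    (hs2 : c'.stks.getD (k-1) [] = c.stks.getD (k-1) []) :
    legal t c' k = legal t c k := by
  by_cases hk0 : k = 0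
  · subst hk0
    rcases hh : c.stks.getD 0 [] with _ | ⟨x, s⟩
    · rw [legal_pop_nil _ _ (by rw [hs1, hh]), legal_pop_nil _ _ hh]
    · rw [legal_pop_cons _ _ _ _ (by rw [hs1, hh] : c'.stks.getD 0 [] = x :: s),
        legal_pop_cons _ _ _ _ hh, hout]
  · rcases hh : c.stks.getD k [] with _ | ⟨x, s⟩
    · rw [legal_mid_nil _ _ _ hk0 hk (by rw [hs1, hh]), legal_mid_nil _ _ _ hk0 hk hh]
    · rw [legal_mid_cons _ _ _ x s hk0 hk (by rw [hs1, hh]),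
        legal_mid_cons _ _ _ _ _ hk0 hk hh, hs2]

/-- Popping the common top of stack 0 preserves the phase-B relation. -/
lemma RB_step_pop {N T r : ℕ} {d c : Conf} (hd : Inv N T d) (hrb : RB N T r d c)
    {x : ℕ} {s s' : List ℕ} (hh : d.stks.getD 0 [] = x :: s)
    (hs' : s' = if 0 = r then s ++ [N+1] else s) :
    RB N T r ⟨d.input, d.stks.set 0 s, d.output ++ [x]⟩
      ⟨c.input, c.stks.set 0 s', c.output ++ [x]⟩ := by
  have h1 : d.stks.length = T := hd.1
  have hr : r ≤ T := hrb.1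
  have h1' : (d.stks.set 0 s).length = T := by simp [h1]
  have hT : 0 < T := by
    have := lt_length_of_getD_ne d.stks 0 (by rw [hh]; simp)
    omega
  refine ⟨hr, hrb.2.1, by rw [hrb.2.2.1], ?_⟩
  show c.stks.set 0 s' = _
  rw [RB_stks_iff h1' hr]
  refine ⟨by rw [List.length_set, RB_len h1 hrb], ?_⟩
  intro j hj
  have hcj := RB_getD h1 hrb j hj
  rw [getD_set', RB_len h1 hrb, hcj]
  simp only [mkB]
  rw [getD_set' d.stks 0 r s, getD_set' d.stks 0 j s, h1]
  split_ifs <;> first | rfl | omega | simp_all | (exfalso; simp_all)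

/-- An interior move `m` (with `0 < m < T`, common to both machines) preserves phase B. -/
lemma RB_step_mid {N T r m : ℕ} {d c : Conf} (hd : Inv N T d) (hrb : RB N T r d c)
    (hm0 : m ≠ 0) (hmT : m < T)
    {x : ℕ} {s s' : List ℕ} (hh : d.stks.getD m [] = x :: s)
    (hs' : s' = if m = r then s ++ [N+1] else s) :
    RB N T r ⟨d.input, (d.stks.set m s).set (m-1) (x :: d.stks.getD (m-1) []), d.output⟩
      ⟨c.input, (c.stks.set m s').set (m-1) (x :: c.stks.getD (m-1) []), c.output⟩ := by
  have h1 : d.stks.length = T := hd.1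
  have hr : r ≤ T := hrb.1
  have h1' : ((d.stks.set m s).set (m-1) (x :: d.stks.getD (m-1) [])).length = T := by
    simp [h1]
  refine ⟨hr, hrb.2.1, hrb.2.2.1, ?_⟩
  show (c.stks.set m s').set (m-1) _ = _
  rw [RB_stks_iff h1' hr]
  refine ⟨by rw [List.length_set, List.length_set, RB_len h1 hrb], ?_⟩
  intro j hj
  have hcj := RB_getD h1 hrb j hj
  have hcm1 := RB_getD h1 hrb (m-1) (by omega : m-1 < T+1)
  rw [getD_set', getD_set', List.length_set, RB_len h1 hrb, hcj, hcm1]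
  simp only [mkB]
  rw [getD_set' (d.stks.set m s) (m-1) r _, getD_set' (d.stks.set m s) (m-1) j _,
    getD_set' d.stks m r s, getD_set' d.stks m j s, List.length_set, h1]
  split_ifs <;> first | rfl | omega | simp_all | (exfalso; simp_all)

end StmtSix
namespace StmtSix

lemma main_B {N T : ℕ} (hT : 1 ≤ T) : ∀ (r : ℕ) {d c : Conf} {m : ℕ},
    Inv N T d → leftMove T d = some m → RB N T r d c →
    ∃ s r', RB N T r' (greedyStep leftMove T d) ((greedyStep leftMove (T+1))^[s] c) := by
  intro r
  induction r using Nat.strong_induction_on with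
  | _ r ih =>
  intro d c m hd hm hrb
  obtain ⟨hleg, hmle, hmin⟩ := leftMove_some_elim hm
  have hout := out_lt_of_some hd hm
  have h1 : d.stks.length = T := hd.1
  have hr : r ≤ T := hrb.1
  by_cases hmig : 1 ≤ r ∧ r ≤ m ∧ (if r < T then d.stks.getD r [] else []) = [] ∧
      d.stks.getD (r-1) [] = []
  · -- the extra element N+1 migrates one stack to the left
    obtain ⟨hr1, hrm, her, hel⟩ := hmig
    have hlm : leftMove (T+1) c = some r := by
      apply leftMove_eq_some (by omega)
      · rw [legal_rb_self hd hrb hr1 her, hel]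
        simp
      · intro k hk
        rw [legal_rb_low hd hrb k (by omega) (Or.inl (by omega))]
        exact hmin k (by omega)
    have hcr : c.stks.getD r [] = [N+1] := by
      rw [RB_getD h1 hrb r (by omega), mkB, if_pos rfl, her, List.nil_append]
    have hrb' : RB N T (r-1) d (greedyStep leftMove (T+1) c) := by
      rw [greedyStep_of_some hlm, apply_mid _ _ _ _ _ (by omega) (by omega) hcr]
      refine ⟨by omega, hrb.2.1, hrb.2.2.1, ?_⟩
      show (c.stks.set r []).set (r-1) ((N+1) :: c.stks.getD (r-1) []) = _
      rw [RB_stks_iff h1 (by omega)]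
      refine ⟨by rw [List.length_set, List.length_set, RB_len h1 hrb], ?_⟩
      intro j hj
      have hcj := RB_getD h1 hrb j hj
      have hcm1 := RB_getD h1 hrb (r-1) (by omega : r-1 < T+1)
      rw [getD_set', getD_set', List.length_set, RB_len h1 hrb, hcj, hcm1]
      simp only [mkB]
      clear ih hm hd hrb hcj hcm1 hlm hcr hleg hmin hout hmle
      split_ifs <;>
        first
          | rfl
          | omega
          | (rw [hel]; rfl)
          | (rw [if_pos (by omega : r < T)] at her; exact her.symm)
          | (rw [show j = r from by omega]; rw [if_pos (by omega : r < T)] at her;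
              exact her.symm)
          | (exfalso; omega)
    obtain ⟨s, r', hres⟩ := ih (r-1) (by omega) hd hm hrb'
    exact ⟨s+1, r', by rw [Function.iterate_succ_apply]; exact hres⟩
  · -- no migration: the big machine mirrors the small machine's move
    have hfalse : ∀ k, k < m → legal (T+1) c k = false := by
      intro k hk
      rcases eq_or_ne k r with rfl | hkr
      · by_cases her : (if k < T then d.stks.getD k [] else []) = []
        · rcases Nat.eq_zero_or_pos k with rfl | hk1
          · exact legal_rb_popN hd hrb rfl her hout
          · rw [legal_rb_self hd hrb hk1 her]
            have hne : d.stks.getD (k-1) [] ≠ [] := fun hc => hmig ⟨hk1, by omega, her, hc⟩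
            simp only [decide_eq_false_iff_not]
            exact hne
        · rw [legal_rb_low hd hrb k (by omega) (Or.inr her)]
          exact hmin k hk
      · rw [legal_rb_low hd hrb k (by omega) (Or.inl hkr)]
        exact hmin k hk
    rcases Nat.lt_or_ge m T with hmT | hmT
    · rcases Nat.eq_zero_or_pos m with rfl | hm1
      · -- pop move
        rcases hh : d.stks.getD 0 [] with _ | ⟨x, s⟩
        · rw [legal_pop_nil _ _ hh] at hleg; exact absurd hleg (by simp)
        · have hcond : (0:ℕ) ≠ r ∨ (if r < T then d.stks.getD r [] else []) ≠ [] := by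
            rcases eq_or_ne (0:ℕ) r with hr0 | hr0
            · right; rw [← hr0, if_pos (by omega), hh]; simp
            · exact Or.inl hr0
          have hlm : leftMove (T+1) c = some 0 :=
            leftMove_eq_some (by omega)
              (by rw [legal_rb_low hd hrb 0 (by omega) hcond]; exact hleg)
              (fun k hk => by omega)
          have hc0 : c.stks.getD 0 [] = x :: (if 0 = r then s ++ [N+1] else s) := by
            rw [RB_getD h1 hrb 0 (by omega), mkB]
            rcases eq_or_ne (0:ℕ) r with hr0 | hr0
            · rw [if_pos hr0, ← hr0, if_pos (by omega), hh, List.cons_append, if_pos rfl]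
            · rw [if_neg hr0, if_pos (by omega), hh, if_neg hr0]
          refine ⟨1, r, ?_⟩
          rw [Function.iterate_one, greedyStep_of_some hlm, greedyStep_of_some hm,
            apply_pop _ _ _ _ hc0, apply_pop _ _ _ _ hh]
          exact RB_step_pop hd hrb hh rfl
      · -- interior move
        rcases hh : d.stks.getD m [] with _ | ⟨x, s⟩
        · rw [legal_mid_nil _ _ _ (by omega) hmT hh] at hleg; exact absurd hleg (by simp)
        · have hcond : m ≠ r ∨ (if r < T then d.stks.getD r [] else []) ≠ [] := by
            rcases eq_or_ne m r with hr0 | hr0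
            · right; rw [← hr0, if_pos hmT, hh]; simp
            · exact Or.inl hr0
          have hlm : leftMove (T+1) c = some m :=
            leftMove_eq_some (by omega)
              (by rw [legal_rb_low hd hrb m hmT hcond]; exact hleg) hfalse
          have hcm : c.stks.getD m [] = x :: (if m = r then s ++ [N+1] else s) := by
            rw [RB_getD h1 hrb m (by omega), mkB]
            rcases eq_or_ne m r with hr0 | hr0
            · rw [if_pos hr0, ← hr0, if_pos hmT, hh, List.cons_append, if_pos rfl]
            · rw [if_neg hr0, if_pos hmT, hh, if_neg hr0]
          refine ⟨1, r, ?_⟩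
          rw [Function.iterate_one, greedyStep_of_some hlm, greedyStep_of_some hm,
            apply_mid _ _ _ _ _ (by omega) (by omega) hcm, apply_mid _ _ _ _ _ (by omega) hmT hh]
          exact RB_step_mid hd hrb (by omega) hmT hh rfl
    · -- push move (m = T): two steps of the big machine
      have hmT' : m = T := by omega
      rw [hmT'] at hleg hmin hm hfalse
      rcases hh : d.input with _ | ⟨x, rest⟩
      · rw [legal_push_nil _ _ (by omega) hh] at hleg; exact absurd hleg (by simp)
      · have hx : x ≤ N := hd.2.2.2.2 x (by rw [hh]; simp)
        have hcin : c.input = x :: rest := by rw [hrb.2.1, hh]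
        have hpleg : canPush x (d.stks.getD (T-1) []) = true := by
          rw [legal_push_cons _ _ _ _ (by omega) hh] at hleg
          exact hleg
        have hTfalse : legal (T+1) c T = false := by
          rcases Nat.lt_or_ge r T with hrT | hrT
          · exact legal_rb_T hd hrb hrT
          · have hrT' : r = T := by omega
            subst hrT'
            have her : (if r < r then d.stks.getD r [] else []) = [] := by
              rw [if_neg (by omega)]
            rw [legal_rb_self hd hrb (by omega) her]
            have hne : d.stks.getD (r-1) [] ≠ [] := fun hc =>
              hmig ⟨by omega, by omega, her, hc⟩
            simp only [decide_eq_false_iff_not]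
            exact hne
        have hlm : leftMove (T+1) c = some (T+1) :=
          leftMove_eq_some le_rfl (legal_rb_push hd hrb hcin hx)
            (fun k hk => by
              rcases Nat.lt_or_ge k T with h2 | h2
              · exact hfalse k h2
              · have hkT : k = T := by omega
                rw [hkT]; exact hTfalse)
        have hcT : c.stks.getD T [] = if T = r then [N+1] else [] := by
          rw [RB_getD h1 hrb T (by omega), mkB]
          rcases eq_or_ne T r with hr0 | hr0
          · rw [if_pos hr0, if_neg (by omega), List.nil_append, if_pos hr0]
          · rw [if_neg hr0, if_neg (by omega), if_neg hr0]
        obtain ⟨c1, hc1⟩ : ∃ c1 : Conf,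
            c1 = ⟨rest, c.stks.set T (x :: c.stks.getD T []), c.output⟩ := ⟨_, rfl⟩
        have hstep1 : greedyStep leftMove (T+1) c = c1 := by
          rw [greedyStep_of_some hlm, apply_push _ _ _ _ (by omega) hcin, hc1]
          simp only [Nat.add_sub_cancel]
        have hc1len : c1.stks.length = T + 1 := by
          rw [hc1]
          show (c.stks.set T _).length = T + 1
          rw [List.length_set, RB_len h1 hrb]
        have hc1T : c1.stks.getD T [] = x :: c.stks.getD T [] := by
          rw [hc1]
          show (c.stks.set T _).getD T [] = _
          rw [getD_set', if_pos ⟨rfl, by rw [RB_len h1 hrb]; omega⟩]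
        have hc1low : ∀ j, j < T → c1.stks.getD j [] = c.stks.getD j [] := by
          intro j hj
          rw [hc1]
          show (c.stks.set T _).getD j [] = _
          rw [getD_set', if_neg (fun hc => by omega)]
        have hlm2 : leftMove (T+1) c1 = some T := by
          apply leftMove_eq_some (by omega)
          · rw [legal_mid_cons _ _ _ _ _ (by omega) (by omega) hc1T,
              hc1low (T-1) (by omega), RB_getD h1 hrb (T-1) (by omega), mkB]
            rcases eq_or_ne (T-1) r with hr0 | hr0
            · rw [if_pos hr0, ← hr0, if_pos (by omega)]
              rcases hhh : d.stks.getD (T-1) [] with _ | ⟨y, sy⟩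
              · rw [List.nil_append, canPush_cons]
                simp
                omega
              · rw [List.cons_append, canPush_cons]
                rw [hhh, canPush_cons] at hpleg
                exact hpleg
            · rw [if_neg hr0, if_pos (by omega)]
              exact hpleg
          · intro k hk
            rw [legal_congr_lt (show k < T+1 by omega) (by rw [hc1])
              (hc1low k hk) (hc1low (k-1) (by omega))]
            exact hfalse k hk
        refine ⟨2, r, ?_⟩
        have h2iter : (greedyStep leftMove (T+1))^[2] c
            = greedyStep leftMove (T+1) (greedyStep leftMove (T+1) c) := rfl
        rw [h2iter, hstep1, greedyStep_of_some hlm2,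
          apply_mid _ _ _ _ _ (by omega) (by omega) hc1T,
          greedyStep_of_some hm, apply_push _ _ _ _ (by omega) hh]
        refine ⟨hr, by rw [hc1], by rw [hc1]; exact hrb.2.2.1, ?_⟩
        show (c1.stks.set T (c.stks.getD T [])).set (T-1) (x :: c1.stks.getD (T-1) []) = _
        rw [RB_stks_iff (show (d.stks.set (T-1) (x :: d.stks.getD (T-1) [])).length = T by
          rw [List.length_set, h1]) hr]
        refine ⟨by rw [List.length_set, List.length_set, hc1len], ?_⟩
        intro j hj
        have hcj := RB_getD h1 hrb j hj
        have hcm1 : c1.stks.getD (T-1) [] = c.stks.getD (T-1) [] := hc1low (T-1) (by omega)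
        have hcT1 := RB_getD h1 hrb (T-1) (by omega : T-1 < T+1)
        have hc1j : c1.stks.getD j [] =
            if T = j ∧ T < T + 1 then x :: c.stks.getD T [] else c.stks.getD j [] := by
          rw [hc1]
          show (c.stks.set T (x :: c.stks.getD T [])).getD j [] = _
          rw [getD_set', RB_len h1 hrb]
        rw [getD_set' (c1.stks.set T (c.stks.getD T [])) (T-1) j _,
          getD_set' c1.stks T j _, List.length_set, hc1len, hcm1, hcT1, hc1j, hcj, hcT]
        simp only [mkB]
        rw [getD_set' d.stks (T-1) r _, getD_set' d.stks (T-1) j _, h1]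
        clear ih hm hd hrb hcj hcm1 hcT1 hc1j hc1T hc1low hc1len hstep1 hc1 hlm hlm2
          hTfalse hfalse hmin hleg hpleg hout h2iter
        split_ifs <;> first | rfl | omega | simp_all | (exfalso; simp_all)

end StmtSix
namespace StmtSix

lemma RA_stks_iff {T : ℕ} {d : Conf} (h1 : d.stks.length = T) (l : List (List ℕ)) :
    l = d.stks ++ [[]] ↔ (l.length = T+1 ∧
      ∀ j, j < T+1 → l.getD j [] = if j < T then d.stks.getD j [] else []) := by
  constructor
  · rintro rfl
    exact ⟨e_length h1, fun j _ => e_getD h1 j⟩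
  · rintro ⟨hl, hpt⟩
    apply stks_ext (by rw [hl, e_length h1])
    intro j hj
    rw [hl] at hj
    rw [hpt j hj, e_getD h1]

lemma eq_append_nil_iff (T : ℕ) (D l : List (List ℕ)) (h1 : D.length = T) :
    l = D ++ [[]] ↔ (l.length = T+1 ∧
      ∀ j, j < T+1 → l.getD j [] = if j < T then D.getD j [] else []) := by
  constructor
  · rintro rfl
    refine ⟨by simp [h1], fun j _ => ?_⟩
    rw [getD_append', h1, getD_singleton]
    split_ifs <;> rfl
  · rintro ⟨hl, hpt⟩
    apply stks_ext (by rw [hl]; simp [h1])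
    intro j hj
    rw [hl] at hj
    rw [hpt j hj, getD_append', h1, getD_singleton]
    split_ifs <;> rfl

lemma RA_stks_len {T N : ℕ} {d c : Conf} (h1 : d.stks.length = T) (hra : RA N T d c) :
    c.stks.length = T + 1 := by
  rw [hra.2.1, e_length h1]

lemma final_B {N T : ℕ} (hT : 1 ≤ T) : ∀ (r : ℕ) {c : Conf},
    RB N T r (finalConf T N) c →
    ∃ s, (greedyStep leftMove (T+1))^[s] c = finalConf (T+1) (N+1) := by
  intro r
  induction r using Nat.strong_induction_on with
  | _ r ih =>
  intro c hrb
  have h1 : (finalConf T N).stks.length = T := by simp [finalConf]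
  have hr : r ≤ T := hrb.1
  have hgd : ∀ j : ℕ, (finalConf T N).stks.getD j [] = [] := fun j => getD_replicate_nil T j
  have hcj : ∀ j, j < T+1 → c.stks.getD j [] = if j = r then [N+1] else [] := by
    intro j hj
    rw [RB_getD h1 hrb j hj, mkB]
    split_ifs with g1 g2
    · rw [hgd, List.nil_append]
    · rw [List.nil_append]
    · exact hgd j
    · rfl
  have hin : c.input = [] := hrb.2.1
  have hout : c.output = List.range' 1 N := hrb.2.2.1
  rcases Nat.eq_zero_or_pos r with rfl | hr1
  · -- pop N+1, done
    have hc0 : c.stks.getD 0 [] = (N+1) :: [] := hcj 0 (by omega)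
    have hlm : leftMove (T+1) c = some 0 := by
      apply leftMove_eq_some (by omega)
      · rw [legal_pop_cons _ _ _ _ hc0, hout]
        simp [List.length_range']
      · intro k hk; omega
    refine ⟨1, ?_⟩
    rw [Function.iterate_one, greedyStep_of_some hlm, apply_pop _ _ _ _ hc0]
    have hstk : c.stks.set 0 [] = List.replicate (T+1) [] := by
      apply stks_ext
      · rw [List.length_set, RB_len h1 hrb, List.length_replicate]
      · intro j hj
        have hclen := RB_len h1 hrb
        rw [List.length_set] at hj
        rw [getD_set', getD_replicate_nil, hcj j (by omega)]
        split_ifs <;> first | rfl | omega | (exfalso; omega)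
    rw [finalConf]
    simp only [Conf.mk.injEq]
    refine ⟨hin, hstk, ?_⟩
    rw [hout, List.range'_1_concat, Nat.add_comm 1 N]
  · -- migrate N+1 one stack to the left
    have hcr : c.stks.getD r [] = (N+1) :: [] := by rw [hcj r (by omega), if_pos rfl]
    have hlm : leftMove (T+1) c = some r := by
      apply leftMove_eq_some (by omega)
      · rw [legal_mid_cons _ _ _ _ _ (by omega) (by omega) hcr,
          hcj (r-1) (by omega), if_neg (by omega), canPush_nil]
      · intro k hk
        rcases Nat.eq_zero_or_pos k with rfl | hk1
        · exact legal_pop_nil _ _ (by rw [hcj 0 (by omega), if_neg (by omega)])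
        · exact legal_mid_nil _ _ _ (by omega) (by omega)
            (by rw [hcj k (by omega), if_neg (by omega)])
    have hrb' : RB N T (r-1) (finalConf T N) (greedyStep leftMove (T+1) c) := by
      rw [greedyStep_of_some hlm, apply_mid _ _ _ _ _ (by omega) (by omega) hcr]
      refine ⟨by omega, hin, hout, ?_⟩
      show (c.stks.set r []).set (r-1) ((N+1) :: c.stks.getD (r-1) []) = _
      rw [RB_stks_iff h1 (by omega)]
      refine ⟨by rw [List.length_set, List.length_set, RB_len h1 hrb], ?_⟩
      intro j hj
      have hcr1 : c.stks.getD (r-1) [] = [] := by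
        rw [hcj (r-1) (by omega), if_neg (by omega)]
      rw [getD_set', getD_set', List.length_set, RB_len h1 hrb, hcr1, hcj j hj, mkB]
      simp only [hgd]
      split_ifs <;> first | rfl | omega | (exfalso; omega) | simp
    obtain ⟨s, hs⟩ := ih (r-1) (by omega) hrb'
    exact ⟨s+1, by rw [Function.iterate_succ_apply]; exact hs⟩

/-- Combined simulation relation. -/
def Rel (N T : ℕ) (d c : Conf) : Prop := RA N T d c ∨ ∃ r, RB N T r d c

lemma main_rel {N T : ℕ} (hT : 1 ≤ T) {d c : Conf} {m : ℕ} (hd : Inv N T d)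
    (hm : leftMove T d = some m) (hrel : Rel N T d c) :
    ∃ s, Rel N T (greedyStep leftMove T d) ((greedyStep leftMove (T+1))^[s] c) := by
  rcases hrel with hra | ⟨r, hrb⟩
  case inr =>
    obtain ⟨s, r', hres⟩ := main_B hT r hd hm hrb
    exact ⟨s, Or.inr ⟨r', hres⟩⟩
  obtain ⟨hleg, hmle, hmin⟩ := leftMove_some_elim hm
  have h1 : d.stks.length = T := hd.1
  have hout : c.output = d.output := hra.2.2
  rcases Nat.lt_or_ge m T with hmT | hmT
  · -- pop or interior move: mirrored in one step
    have hlm : leftMove (T+1) c = some m :=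
      leftMove_eq_some (by omega)
        (by rw [legal_ra_low h1 hra m hmT]; exact hleg)
        (fun k hk => by rw [legal_ra_low h1 hra k (by omega)]; exact hmin k hk)
    rcases Nat.eq_zero_or_pos m with rfl | hm1
    · rcases hh : d.stks.getD 0 [] with _ | ⟨x, s⟩
      · rw [legal_pop_nil _ _ hh] at hleg; exact absurd hleg (by simp)
      · have hc0 : c.stks.getD 0 [] = x :: s := by
          rw [RA_getD h1 hra, if_pos (by omega), hh]
        refine ⟨1, Or.inl ?_⟩
        rw [Function.iterate_one, greedyStep_of_some hlm, greedyStep_of_some hm,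
          apply_pop _ _ _ _ hc0, apply_pop _ _ _ _ hh]
        refine ⟨hra.1, ?_, by rw [hout]⟩
        show c.stks.set 0 s = (d.stks.set 0 s) ++ [[]]
        rw [eq_append_nil_iff T _ _ (by rw [List.length_set, h1])]
        refine ⟨by rw [List.length_set, RA_stks_len h1 hra], ?_⟩
        intro j hj
        rw [getD_set', RA_stks_len h1 hra, RA_getD h1 hra, getD_set' d.stks 0 j s, h1]
        split_ifs <;> first | rfl | omega
    · rcases hh : d.stks.getD m [] with _ | ⟨x, s⟩
      · rw [legal_mid_nil _ _ _ (by omega) hmT hh] at hleg; exact absurd hleg (by simp)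
      · have hcm : c.stks.getD m [] = x :: s := by
          rw [RA_getD h1 hra, if_pos hmT, hh]
        have hcm1 : c.stks.getD (m-1) [] = d.stks.getD (m-1) [] := by
          rw [RA_getD h1 hra, if_pos (by omega)]
        refine ⟨1, Or.inl ?_⟩
        rw [Function.iterate_one, greedyStep_of_some hlm, greedyStep_of_some hm,
          apply_mid _ _ _ _ _ (by omega) (by omega) hcm, apply_mid _ _ _ _ _ (by omega) hmT hh]
        refine ⟨hra.1, ?_, hout⟩
        show (c.stks.set m s).set (m-1) (x :: c.stks.getD (m-1) [])
          = ((d.stks.set m s).set (m-1) (x :: d.stks.getD (m-1) [])) ++ [[]]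
        rw [hcm1, eq_append_nil_iff T _ _ (by rw [List.length_set, List.length_set, h1])]
        refine ⟨by rw [List.length_set, List.length_set, RA_stks_len h1 hra], ?_⟩
        intro j hj
        rw [getD_set', getD_set', List.length_set, RA_stks_len h1 hra, RA_getD h1 hra,
          getD_set' (d.stks.set m s) (m-1) j _, getD_set' d.stks m j s, List.length_set, h1]
        split_ifs <;> first | rfl | omega
  · -- push move
    have hmT' : m = T := by omega
    rw [hmT'] at hleg hmin hm
    rcases hh : d.input with _ | ⟨x, rest⟩
    · rw [legal_push_nil _ _ (by omega) hh] at hleg; exact absurd hleg (by simp)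
    have hpleg : canPush x (d.stks.getD (T-1) []) = true := by
      rw [legal_push_cons _ _ _ _ (by omega) hh] at hleg; exact hleg
    have hkfalse : ∀ k, k < T+1 → legal (T+1) c k = false := by
      intro k hk
      rcases Nat.lt_or_ge k T with h2 | h2
      · rw [legal_ra_low h1 hra k h2]; exact hmin k h2
      · have hkT : k = T := by omega
        rw [hkT]
        exact legal_ra_T hT h1 hra
    obtain ⟨u, v, hdu, hcu⟩ := hra.1
    rcases u with _ | ⟨x', u'⟩
    · -- the big machine pushes N+1 : transition to phase B
      simp only [List.nil_append] at hdu hcu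
      have hlm : leftMove (T+1) c = some (T+1) :=
        leftMove_eq_some le_rfl (legal_ra_push hT h1 hra hcu) hkfalse
      have hcT : c.stks.getD T [] = [] := by
        rw [RA_getD h1 hra, if_neg (by omega)]
      have hrb1 : RB N T T d (greedyStep leftMove (T+1) c) := by
        rw [greedyStep_of_some hlm, apply_push _ _ _ _ (by omega) hcu]
        simp only [Nat.add_sub_cancel]
        refine ⟨le_rfl, by rw [hdu], hout, ?_⟩
        show c.stks.set T ((N+1) :: c.stks.getD T []) = _
        rw [hcT, RB_stks_iff h1 le_rfl]
        refine ⟨by rw [List.length_set, RA_stks_len h1 hra], ?_⟩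
        intro j hj
        rw [getD_set', RA_stks_len h1 hra, RA_getD h1 hra, mkB]
        split_ifs <;> first | rfl | omega | (exfalso; omega) | simp
      obtain ⟨s, r', hres⟩ := main_B hT T hd hm hrb1
      refine ⟨s+1, Or.inr ⟨r', ?_⟩⟩
      rw [Function.iterate_succ_apply]
      exact hres
    · -- ordinary push mirrored in two steps
      have hh0 := hh
      rw [hdu] at hh
      simp only [List.cons_append] at hh
      injection hh with hxx hrest
      subst hxx
      have hrest' : rest = u' ++ v := hrest.symm
      have hcin : c.input = x' :: (u' ++ (N+1) :: v) := by rw [hcu]; rfl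
      have hlm : leftMove (T+1) c = some (T+1) :=
        leftMove_eq_some le_rfl (legal_ra_push hT h1 hra hcin) hkfalse
      have hcT : c.stks.getD T [] = [] := by
        rw [RA_getD h1 hra, if_neg (by omega)]
      obtain ⟨c1, hc1⟩ : ∃ c1 : Conf,
          c1 = ⟨u' ++ (N+1) :: v, c.stks.set T [x'], c.output⟩ := ⟨_, rfl⟩
      have hstep1 : greedyStep leftMove (T+1) c = c1 := by
        rw [greedyStep_of_some hlm, apply_push _ _ _ _ (by omega) hcin, hc1]
        simp only [Nat.add_sub_cancel]
        rw [hcT]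
      have hc1len : c1.stks.length = T + 1 := by
        rw [hc1]
        show (c.stks.set T _).length = T + 1
        rw [List.length_set, RA_stks_len h1 hra]
      have hc1T : c1.stks.getD T [] = x' :: [] := by
        rw [hc1]
        show (c.stks.set T _).getD T [] = _
        rw [getD_set', if_pos ⟨rfl, by rw [RA_stks_len h1 hra]; omega⟩]
      have hc1low : ∀ j, j < T → c1.stks.getD j [] = c.stks.getD j [] := by
        intro j hj
        rw [hc1]
        show (c.stks.set T _).getD j [] = _
        rw [getD_set', if_neg (fun hc => by omega)]
      have hlm2 : leftMove (T+1) c1 = some T := by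
        apply leftMove_eq_some (by omega)
        · rw [legal_mid_cons _ _ _ _ _ (by omega) (by omega) hc1T,
            hc1low (T-1) (by omega), RA_getD h1 hra, if_pos (by omega)]
          exact hpleg
        · intro k hk
          rw [legal_congr_lt (show k < T+1 by omega) (by rw [hc1])
            (hc1low k hk) (hc1low (k-1) (by omega))]
          exact hkfalse k (by omega)
      refine ⟨2, Or.inl ?_⟩
      have h2iter : (greedyStep leftMove (T+1))^[2] c
          = greedyStep leftMove (T+1) (greedyStep leftMove (T+1) c) := rfl
      rw [h2iter, hstep1, greedyStep_of_some hlm2,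
        apply_mid _ _ _ _ _ (by omega) (by omega) hc1T,
        greedyStep_of_some hm, apply_push _ _ _ _ (by omega) hh0]
      refine ⟨⟨u', v, hrest', by rw [hc1]⟩, ?_, by rw [hc1]; exact hout⟩
      show (c1.stks.set T []).set (T-1) (x' :: c1.stks.getD (T-1) [])
        = (d.stks.set (T-1) (x' :: d.stks.getD (T-1) [])) ++ [[]]
      rw [eq_append_nil_iff T _ _ (show (d.stks.set (T-1) (x' :: d.stks.getD (T-1) [])).length = T by
        rw [List.length_set, h1])]
      refine ⟨by rw [List.length_set, List.length_set, hc1len], ?_⟩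
      intro j hj
      have hcm1 : c1.stks.getD (T-1) [] = d.stks.getD (T-1) [] := by
        rw [hc1low (T-1) (by omega), RA_getD h1 hra, if_pos (by omega)]
      have hc1j : c1.stks.getD j [] =
          if T = j ∧ T < T + 1 then [x'] else c.stks.getD j [] := by
        rw [hc1]
        show (c.stks.set T [x']).getD j [] = _
        rw [getD_set', RA_stks_len h1 hra]
      rw [getD_set' (c1.stks.set T []) (T-1) j _, getD_set' c1.stks T j _,
        List.length_set, hc1len, hcm1, hc1j, RA_getD h1 hra,
        getD_set' d.stks (T-1) j _, h1]
      split_ifs <;> first | rfl | omega | (exfalso; omega)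

lemma final_rel {N T : ℕ} (hT : 1 ≤ T) {c : Conf} (hrel : Rel N T (finalConf T N) c) :
    ∃ s, (greedyStep leftMove (T+1))^[s] c = finalConf (T+1) (N+1) := by
  rcases hrel with hra | ⟨r, hrb⟩
  case inr => exact final_B hT r hrb
  have h1 : (finalConf T N).stks.length = T := by simp [finalConf]
  obtain ⟨u, v, hdu, hcu⟩ := hra.1
  have h0 : u ++ v = ([] : List ℕ) := by rw [← hdu]; rfl
  rw [List.append_eq_nil_iff] at h0
  obtain ⟨rfl, rfl⟩ := h0
  replace hcu : c.input = [N+1] := by simpa using hcu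
  have hgd : ∀ j : ℕ, c.stks.getD j [] = [] := by
    intro j
    rw [RA_getD h1 hra]
    split_ifs
    · exact getD_replicate_nil T j
    · rfl
  have hlm : leftMove (T+1) c = some (T+1) := by
    apply leftMove_eq_some le_rfl
    · rw [legal_push_cons _ _ _ _ (by omega) hcu, hgd, canPush_nil]
    · intro k hk
      rcases Nat.eq_zero_or_pos k with rfl | hk1
      · exact legal_pop_nil _ _ (hgd 0)
      · exact legal_mid_nil _ _ _ (by omega) (by omega) (hgd k)
  have hrb1 : RB N T T (finalConf T N) (greedyStep leftMove (T+1) c) := by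
    rw [greedyStep_of_some hlm, apply_push _ _ _ _ (by omega) hcu]
    simp only [Nat.add_sub_cancel]
    refine ⟨le_rfl, rfl, hra.2.2, ?_⟩
    show c.stks.set T ((N+1) :: c.stks.getD T []) = _
    rw [hgd T, RB_stks_iff h1 le_rfl]
    refine ⟨by rw [List.length_set, RA_stks_len h1 hra], ?_⟩
    intro j hj
    rw [getD_set', RA_stks_len h1 hra, hgd j, mkB]
    have hfd : ∀ (b j' : ℕ), (finalConf T b).stks.getD j' [] = [] :=
      fun b j' => getD_replicate_nil T j'
    simp only [hfd]
    split_ifs <;> first | rfl | omega | simp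
  obtain ⟨s, hs⟩ := final_B hT T hrb1
  exact ⟨s+1, by rw [Function.iterate_succ_apply]; exact hs⟩

end StmtSix
namespace StmtSix

lemma rel_iterate {N T : ℕ} (hT : 1 ≤ T) {p p' : List ℕ}
    (hb : ∀ x ∈ p, x ≤ N) (hl : p.length = N)
    (hinit : Rel N T (initConf T p) (initConf (T+1) p')) :
    ∀ k, ∃ s, Rel N T ((greedyStep leftMove T)^[k] (initConf T p))
      ((greedyStep leftMove (T+1))^[s] (initConf (T+1) p')) := by
  intro k
  induction k with
  | zero => exact ⟨0, hinit⟩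
  | succ n ihn =>
    obtain ⟨s, hs⟩ := ihn
    rcases hlm : leftMove T ((greedyStep leftMove T)^[n] (initConf T p)) with _ | m
    · rw [Function.iterate_succ_apply', greedyStep_of_none hlm]
      exact ⟨s, hs⟩
    · have hinv := inv_iterate N T p hb hl n
      obtain ⟨s2, hs2⟩ := main_rel hT hinv hlm hs
      refine ⟨s2 + s, ?_⟩
      rw [Function.iterate_succ_apply', Function.iterate_add_apply]
      exact hs2

lemma main_sim {N T : ℕ} (hT : 1 ≤ T) {p p' : List ℕ}
    (hb : ∀ x ∈ p, x ≤ N) (hl : p.length = N)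
    (hinit : Rel N T (initConf T p) (initConf (T+1) p'))
    (h : ∃ K, (greedyStep leftMove T)^[K] (initConf T p) = finalConf T N) :
    ∃ S, (greedyStep leftMove (T+1))^[S] (initConf (T+1) p') = finalConf (T+1) (N+1) := by
  obtain ⟨K, hK⟩ := h
  obtain ⟨s, hs⟩ := rel_iterate hT hb hl hinit K
  rw [hK] at hs
  obtain ⟨s2, hs2⟩ := final_rel hT hs
  exact ⟨s2 + s, by rw [Function.iterate_add_apply]; exact hs2⟩

end StmtSix

/-- If `p` (of length `n-1`) is sortable by the left-greedy algorithm on `t-1` stacks,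
inserting the value `n = p.length + 1` anywhere gives a permutation sortable by the
left-greedy algorithm on `t` stacks. -/
theorem stmt6 (t : ℕ) (ht : 1 ≤ t) (p : List ℕ) (hp : IsPermOf p.length p)
    (h : LeftGreedySorts (t - 1) p) (i : ℕ) (hi : i ≤ p.length) :
    LeftGreedySorts t (p.take i ++ (p.length + 1) :: p.drop i) := by
  rcases Nat.lt_or_ge t 2 with ht2 | ht2
  · -- t = 1 : the hypothesis forces p = []
    have ht1 : t = 1 := by omega
    subst ht1
    have hp0 : p = [] := by
      obtain ⟨k, hk⟩ := h
      have hid : ∀ j, (greedyStep leftMove (1-1))^[j] (initConf (1-1) p) = initConf 0 p := by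
        intro j
        induction j with
        | zero => rfl
        | succ n ihn =>
          rw [Function.iterate_succ_apply', ihn]
          apply StmtSix.greedyStep_of_none
          apply StmtSix.leftMove_eq_none
          intro m
          by_cases hm0 : m = 0
          · subst hm0
            exact StmtSix.legal_pop_nil _ _ rfl
          · exact StmtSix.legal_else _ _ _ hm0 (by omega) hm0
      rw [hid k] at hk
      have := congrArg Conf.input hk
      simpa [initConf, finalConf] using this
    subst hp0
    simp only [List.take_nil, List.drop_nil, List.length_nil, Nat.zero_add]
    exact ⟨2, by decide⟩
  · -- t ≥ 2
    obtain ⟨T, rfl⟩ : ∃ T, t = T + 1 := ⟨t - 1, by omega⟩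
    have hT : 1 ≤ T := by omega
    simp only [Nat.add_sub_cancel] at h
    have hb : ∀ x ∈ p, x ≤ p.length := by
      intro x hx
      have := (hp.mem_iff).mp hx
      rw [List.mem_range'_1] at this
      omega
    have hinit : StmtSix.Rel p.length T (initConf T p)
        (initConf (T+1) (p.take i ++ (p.length + 1) :: p.drop i)) := by
      refine Or.inl ⟨⟨p.take i, p.drop i, (List.take_append_drop i p).symm, rfl⟩, ?_, rfl⟩
      show List.replicate (T+1) [] = List.replicate T [] ++ [[]]
      exact List.replicate_succ'
    obtain ⟨S, hS⟩ := StmtSix.main_sim hT hb rfl hinit h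
    have hlen : (p.take i ++ (p.length + 1) :: p.drop i).length = p.length + 1 := by
      simp [List.length_take, List.length_drop]
      omega
    refine ⟨S, ?_⟩
    rw [hlen]
    exact hS
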